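/- arXiv:2402.07082 — 3 statements merged into one kernel-verified Lean document; each statement's English description precedes it below -/
import Mathlib

section
/- Let x₀, x₁, …, x_T be probability vectors in the simplex over [A] defined by the exponential weights update x_{t+1,i} = x_{t,i}·exp(−η c_{t,i}) / Σ_{i'} x_{t,i'}·exp(−η c_{t,i'}), starting from the uniform distribution x₀ = (1/A,…,1/A), where c_t ∈ ℝ^A are loss vectors satisfying η·c_{t,i} ≥ −1 for all t ∈ [T] and i ∈ [A]. Then for any probability distribution y on [A], Σ_{t=1}^T ⟨x_t − y, c_t⟩ ≤ (log A)/η + η·Σ_{t=1}^T Σ_{i=1}^A x_{t,i}·c_{t,i}². -/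
open Finset

lemma exp_quad {w : ℝ} (hw : w ≤ 1) : Real.exp w ≤ 1 + w + w ^ 2 := by
  rcases le_or_gt w 0 with h | h
  · have h1 : (0:ℝ) < 1 - w := by linarith
    have h2 : 1 - w ≤ Real.exp (-w) := by
      have := Real.add_one_le_exp (-w); linarith
    have h3 : Real.exp w ≤ (1 - w)⁻¹ := by
      rw [show Real.exp w = (Real.exp (-w))⁻¹ by rw [← Real.exp_neg, neg_neg]]
      exact inv_anti₀ h1 h2
    have h4 : (1 - w)⁻¹ ≤ 1 + w + w ^ 2 := by
      rw [inv_le_iff_one_le_mul₀ h1]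
      nlinarith [pow_nonneg (neg_nonneg.mpr h) 3]
    linarith
  · have := Real.exp_bound' h.le hw (n := 3) (by norm_num)
    calc Real.exp w ≤ _ := this
      _ ≤ 1 + w + w ^ 2 := by
        repeat rw [Finset.sum_range_succ]
        norm_num [Nat.factorial]
        nlinarith

/-- EXP3 regret guarantee: exponential-weights iterates started from the uniform
distribution, with losses satisfying `η c t i ≥ -1`, enjoy the regret bound
`∑_t ⟨x_t - y, c_t⟩ ≤ log A / η + η ∑_t ∑_i x_{t,i} c_{t,i}²` against any
distribution `y` on the `A` actions. -/
theorem exp3_regret (A T : ℕ) (hA : 1 ≤ A) (η : ℝ) (hη : 0 < η)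
    (c : ℕ → Fin A → ℝ) (x : ℕ → Fin A → ℝ)
    (hx0 : ∀ i, x 0 i = 1 / A)
    (hupd : ∀ t, t < T → ∀ i,
      x (t + 1) i = x t i * Real.exp (-η * c t i) / ∑ i', x t i' * Real.exp (-η * c t i'))
    (hc : ∀ t, t < T → ∀ i : Fin A, -1 ≤ η * c t i)
    (y : Fin A → ℝ) (hy0 : ∀ i, 0 ≤ y i) (hy1 : ∑ i, y i = 1) :
    ∑ t ∈ range T, ∑ i, (x t i - y i) * c t i
      ≤ Real.log A / η + η * ∑ t ∈ range T, ∑ i, x t i * (c t i) ^ 2 := by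
  have hA' : (0:ℝ) < A := by exact_mod_cast hA
  haveI : Nonempty (Fin A) := ⟨⟨0, hA⟩⟩
  -- invariants: positivity and sum-to-one up to time T
  have inv : ∀ t, t ≤ T → (∀ i, 0 < x t i) ∧ (∑ i, x t i = 1) := by
    intro t
    induction t with
    | zero =>
      intro _
      refine ⟨fun i => ?_, ?_⟩
      · rw [hx0]; positivity
      · simp only [hx0]
        rw [Finset.sum_const, Finset.card_univ, Fintype.card_fin, nsmul_eq_mul]
        field_simp
    | succ n ih =>
      intro h
      have hn : n < T := Nat.lt_of_succ_le h
      obtain ⟨hp, hs⟩ := ih hn.le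
      have hZ : 0 < ∑ i', x n i' * Real.exp (-η * c n i') :=
        Finset.sum_pos (fun i _ => mul_pos (hp i) (Real.exp_pos _)) Finset.univ_nonempty
      refine ⟨fun i => ?_, ?_⟩
      · rw [hupd n hn i]
        exact div_pos (mul_pos (hp i) (Real.exp_pos _)) hZ
      · simp only [hupd n hn]
        rw [← Finset.sum_div, div_self hZ.ne']
  set f : ℕ → ℝ := fun t => ∑ i, y i * Real.log (x t i) with hf
  have key : ∀ t < T, η * (∑ i, (x t i - y i) * c t i)
      ≤ η ^ 2 * (∑ i, x t i * (c t i) ^ 2) + (f (t + 1) - f t) := by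
    intro t ht
    obtain ⟨hp, hs⟩ := inv t ht.le
    set Z := ∑ i', x t i' * Real.exp (-η * c t i') with hZdef
    have hZ : 0 < Z :=
      Finset.sum_pos (fun i _ => mul_pos (hp i) (Real.exp_pos _)) Finset.univ_nonempty
    set S1 := ∑ i, x t i * c t i with hS1
    set S2 := ∑ i, x t i * (c t i) ^ 2 with hS2
    have hZle : Z ≤ 1 - η * S1 + η ^ 2 * S2 := by
      have step : Z ≤ ∑ i, x t i * (1 + (-η * c t i) + (-η * c t i) ^ 2) := by
        apply Finset.sum_le_sum
        intro i _
        apply mul_le_mul_of_nonneg_left _ (hp i).le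
        apply exp_quad
        have := hc t ht i; linarith
      calc Z ≤ _ := step
        _ = (∑ i, x t i) - η * S1 + η ^ 2 * S2 := by
          rw [hS1, hS2, Finset.mul_sum, Finset.mul_sum, ← Finset.sum_sub_distrib,
            ← Finset.sum_add_distrib]
          exact Finset.sum_congr rfl fun i _ => by ring
        _ = 1 - η * S1 + η ^ 2 * S2 := by rw [hs]
    have hb : 0 < 1 - η * S1 + η ^ 2 * S2 := lt_of_lt_of_le hZ hZle
    have hlogZ : Real.log Z ≤ -η * S1 + η ^ 2 * S2 := by
      calc Real.log Z ≤ Real.log (1 - η * S1 + η ^ 2 * S2) := Real.log_le_log hZ hZle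
        _ ≤ (1 - η * S1 + η ^ 2 * S2) - 1 := Real.log_le_sub_one_of_pos hb
        _ = -η * S1 + η ^ 2 * S2 := by ring
    have hlog : ∀ i, Real.log (x (t + 1) i)
        = Real.log (x t i) + (-η * c t i) - Real.log Z := by
      intro i
      rw [hupd t ht i, ← hZdef, Real.log_div (mul_pos (hp i) (Real.exp_pos _)).ne' hZ.ne',
        Real.log_mul (hp i).ne' (Real.exp_pos _).ne', Real.log_exp]
    have htel : f (t + 1) - f t = -η * (∑ i, y i * c t i) - Real.log Z := by
      simp only [hf]
      rw [← Finset.sum_sub_distrib]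
      have : ∀ i ∈ univ, y i * Real.log (x (t + 1) i) - y i * Real.log (x t i)
          = y i * (-η * c t i) - y i * Real.log Z := by
        intro i _; rw [hlog i]; ring
      rw [Finset.sum_congr rfl this, Finset.sum_sub_distrib, ← Finset.sum_mul, hy1, one_mul]
      rw [show ∑ i, y i * (-η * c t i) = -η * ∑ i, y i * c t i by
        rw [Finset.mul_sum]; exact Finset.sum_congr rfl fun i _ => by ring]
    have hexpand : ∑ i, (x t i - y i) * c t i = S1 - ∑ i, y i * c t i := by
      rw [hS1, ← Finset.sum_sub_distrib]
      exact Finset.sum_congr rfl fun i _ => by ring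
    rw [hexpand, htel]
    have hr : η * (S1 - ∑ i, y i * c t i) = η * S1 - η * ∑ i, y i * c t i := by ring
    linarith
  have sumkey : η * (∑ t ∈ range T, ∑ i, (x t i - y i) * c t i)
      ≤ η ^ 2 * (∑ t ∈ range T, ∑ i, x t i * (c t i) ^ 2) + (f T - f 0) := by
    rw [Finset.mul_sum, Finset.mul_sum, ← Finset.sum_range_sub f, ← Finset.sum_add_distrib]
    exact Finset.sum_le_sum fun t ht => key t (mem_range.mp ht)
  have hf0 : f 0 = -Real.log A := by
    simp only [hf, hx0]
    rw [← Finset.sum_mul, hy1, one_mul, one_div, Real.log_inv]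
  have hfT : f T ≤ 0 := by
    obtain ⟨hp, hs⟩ := inv T le_rfl
    apply Finset.sum_nonpos
    intro i _
    have hle : x T i ≤ 1 := by
      have := Finset.single_le_sum (f := x T) (fun j _ => (hp j).le) (mem_univ i)
      linarith [hs]
    exact mul_nonpos_of_nonneg_of_nonpos (hy0 i) (Real.log_nonpos (hp i).le hle)
  have hfin : η * (∑ t ∈ range T, ∑ i, (x t i - y i) * c t i)
      ≤ Real.log A + η ^ 2 * (∑ t ∈ range T, ∑ i, x t i * (c t i) ^ 2) := by
    linarith
  rw [← mul_le_mul_iff_right₀ hη]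
  calc η * (∑ t ∈ range T, ∑ i, (x t i - y i) * c t i)
      ≤ Real.log A + η ^ 2 * (∑ t ∈ range T, ∑ i, x t i * (c t i) ^ 2) := hfin
    _ = η * (Real.log A / η + η * ∑ t ∈ range T, ∑ i, x t i * (c t i) ^ 2) := by
        field_simp
end

section
/- In the exponential weights analysis, for each step t, the potential Φ_t = (1/η)·log(Σ_i exp(−η C_{t,i})) with C_{t,i} = Σ_{t'≤t} c_{t',i} satisfies Φ_t − Φ_{t−1} ≤ −⟨x_t, c_t⟩ + η·Σ_i x_{t,i} c_{t,i}² whenever η c_{t,i} ≥ −1 for all i, where x_{t,i} = exp(−η C_{t−1,i}) / Σ_{i'} exp(−η C_{t−1,i'}). -/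
open Finset

lemma exp_neg_le_quadratic {y : ℝ} (hy : -1 ≤ y) :
    Real.exp (-y) ≤ 1 - y + y ^ 2 := by
  rcases le_or_gt 0 y with h | h
  · -- exp(-y) ≤ 1/(1+y) ≤ 1 - y + y²
    have h1 : y + 1 ≤ Real.exp y := Real.add_one_le_exp y
    have h2 : Real.exp (-y) * Real.exp y = 1 := by
      rw [← Real.exp_add]; simp
    have h3 : (0:ℝ) < Real.exp (-y) := Real.exp_pos _
    nlinarith [mul_le_mul_of_nonneg_left h1 h3.le]
  · -- y ∈ [-1, 0): use exp_bound with n = 2 on z = -y ∈ (0,1]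
    set z : ℝ := -y with hz
    have hz01 : 0 < z ∧ z ≤ 1 := ⟨by linarith, by linarith⟩
    have habs : |z| ≤ 1 := by rw [abs_of_pos hz01.1]; exact hz01.2
    have hb := Real.exp_bound habs (n := 2)
    have hsum : ∑ i ∈ Finset.range 2, z ^ i / (Nat.factorial i : ℝ) = 1 + z := by
      simp [Finset.sum_range_succ, Nat.factorial]
    rw [hsum] at hb
    have hb' : Real.exp z - (1 + z) ≤ |z| ^ 2 * ((Nat.succ 2 : ℝ) / ((Nat.factorial 2 : ℝ) * (2:ℕ))) :=
      (abs_le.mp (hb (by norm_num))).2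
    have : Real.exp z ≤ 1 + z + z ^ 2 := by
      rw [abs_of_pos hz01.1] at hb'
      norm_num [Nat.factorial] at hb'
      nlinarith [sq_nonneg z]
    have : Real.exp (-y) = Real.exp z := by rw [hz]
    rw [this]
    have h2 : 1 + z + z ^ 2 = 1 - y + y ^ 2 := by rw [hz]; ring
    linarith [h2 ▸ ‹Real.exp z ≤ 1 + z + z ^ 2›]

/-- One-step potential inequality in the exponential-weights analysis:
with `Φ = (1/η) log ∑_i exp(-η C_i)`, prefix sums `Cprev` and current loss `c`
satisfying `η c i ≥ -1`, and `x i = exp(-η Cprev i) / ∑ exp(-η Cprev i')`,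
one has `Φ_t - Φ_{t-1} ≤ -⟨x, c⟩ + η ∑_i x_i c_i²`. -/
theorem exp3_potential_step (A : ℕ) (hA : 0 < A) (η : ℝ) (hη : 0 < η)
    (Cprev c : Fin A → ℝ) (hc : ∀ i, -1 ≤ η * c i)
    (x : Fin A → ℝ)
    (hx : ∀ i, x i = Real.exp (-η * Cprev i) / ∑ i', Real.exp (-η * Cprev i')) :
    (1 / η) * Real.log (∑ i, Real.exp (-η * (Cprev i + c i)))
        - (1 / η) * Real.log (∑ i, Real.exp (-η * Cprev i))
      ≤ -(∑ i, x i * c i) + η * ∑ i, x i * (c i) ^ 2 := by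
  set S : ℝ := ∑ i, Real.exp (-η * Cprev i) with hS
  set T : ℝ := ∑ i, Real.exp (-η * (Cprev i + c i)) with hT
  have hSpos : 0 < S := by
    apply Finset.sum_pos (fun i _ => Real.exp_pos _)
    exact Finset.univ_nonempty_iff.mpr ⟨⟨0, hA⟩⟩
  have hTpos : 0 < T := by
    apply Finset.sum_pos (fun i _ => Real.exp_pos _)
    exact Finset.univ_nonempty_iff.mpr ⟨⟨0, hA⟩⟩
  set u : ℝ := -(∑ i, x i * c i) + η * ∑ i, x i * (c i) ^ 2 with hu
  -- key estimate: T ≤ S * (1 + η * u)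
  have key : T ≤ S * (1 + η * u) := by
    have hterm : ∀ i : Fin A, Real.exp (-η * (Cprev i + c i)) ≤
        Real.exp (-η * Cprev i) * (1 - η * c i + (η * c i) ^ 2) := by
      intro i
      have h1 : Real.exp (-(η * c i)) ≤ 1 - η * c i + (η * c i) ^ 2 :=
        exp_neg_le_quadratic (hc i)
      calc Real.exp (-η * (Cprev i + c i))
          = Real.exp (-η * Cprev i) * Real.exp (-(η * c i)) := by
            rw [← Real.exp_add]; ring_nf
        _ ≤ Real.exp (-η * Cprev i) * (1 - η * c i + (η * c i) ^ 2) := by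
            exact mul_le_mul_of_nonneg_left h1 (Real.exp_pos _).le
    calc T ≤ ∑ i, Real.exp (-η * Cprev i) * (1 - η * c i + (η * c i) ^ 2) :=
          Finset.sum_le_sum fun i _ => hterm i
      _ = S * (1 + η * u) := by
          have hx' : ∀ i, Real.exp (-η * Cprev i) = x i * S := by
            intro i; rw [hx i]; field_simp
          simp only [hx']
          have hxsum : ∑ i, x i = 1 := by
            have : ∑ i, x i = (∑ i, Real.exp (-η * Cprev i)) / S := by
              rw [Finset.sum_div]; exact Finset.sum_congr rfl fun i _ => hx i
            rw [this, ← hS, div_self hSpos.ne']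
          rw [hu]
          have expand : ∑ i, x i * S * (1 - η * c i + (η * c i) ^ 2)
              = S * ((∑ i, x i) - η * (∑ i, x i * c i) + η^2 * (∑ i, x i * (c i)^2)) := by
            rw [Finset.mul_sum]
            simp only [Finset.mul_sum, ← Finset.sum_add_distrib, ← Finset.sum_sub_distrib]
            exact Finset.sum_congr rfl fun i _ => by ring
          rw [expand, hxsum]; ring
  -- from key: log T - log S ≤ η * u
  have hlog : Real.log T - Real.log S ≤ η * u := by
    have h1 : Real.log T ≤ Real.log (S * (1 + η * u)) :=
      Real.log_le_log hTpos key
    have hpos : 0 < 1 + η * u := by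
      have := hTpos
      nlinarith [key, hSpos]
    rw [Real.log_mul hSpos.ne' hpos.ne'] at h1
    have h2 : Real.log (1 + η * u) ≤ η * u := by
      have := Real.log_le_sub_one_of_pos hpos
      linarith
    linarith
  have : (1 / η) * Real.log T - (1 / η) * Real.log S ≤ u := by
    rw [← mul_sub]
    calc (1 / η) * (Real.log T - Real.log S) ≤ (1 / η) * (η * u) := by
          apply mul_le_mul_of_nonneg_left hlog (by positivity)
      _ = u := by field_simp
  exact this
end

section
/- Let X be a random vector in ℝ^d, α > 0 a scalar, and Σ a positive definite d×d matrix. If α·E[‖X‖²_{Σ^{-1}}] ≤ L where L ≥ e − 1, then α·E[‖X‖²_{Σ^{-1}}] ≤ L·log( det(Σ + α·E[X Xᵀ]) / det(Σ) ) ≤ α·L·E[‖X‖²_{Σ^{-1}}], where ‖v‖²_M := vᵀ M v. -/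
open MeasureTheory Matrix
open scoped MatrixOrder

private lemma aux_one_add_sum_le_prod {ι : Type*} (s : Finset ι) (f : ι → ℝ)
    (hf : ∀ i ∈ s, 0 ≤ f i) : 1 + ∑ i ∈ s, f i ≤ ∏ i ∈ s, (1 + f i) := by
  induction s using Finset.cons_induction with
  | empty => simp
  | cons a s ha ih =>
    rw [Finset.sum_cons, Finset.prod_cons]
    have h1 : 0 ≤ f a := hf a (Finset.mem_cons_self a s)
    have h2 : ∀ i ∈ s, 0 ≤ f i := fun i hi => hf i (Finset.mem_cons_of_mem hi)
    have h3 : 0 ≤ ∑ i ∈ s, f i := Finset.sum_nonneg h2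
    have h4 := ih h2
    nlinarith

private lemma aux_scalar {q L : ℝ} (hq0 : 0 ≤ q) (hqL : q ≤ L)
    (hL : Real.exp 1 - 1 ≤ L) : q ≤ L * Real.log (1 + q) := by
  have he : (1:ℝ) < Real.exp 1 := by
    have := Real.exp_one_gt_d9; norm_num at this; linarith
  have hL0 : 0 < L := by linarith
  have hmem1 : (1:ℝ) ∈ Set.Ioi (0:ℝ) := by norm_num
  have hmem2 : (1+L) ∈ Set.Ioi (0:ℝ) := by simp; linarith
  have ha : 0 ≤ 1 - q / L := by
    have : q / L ≤ 1 := (div_le_one hL0).mpr hqL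
    linarith
  have hb : 0 ≤ q / L := div_nonneg hq0 hL0.le
  have key := strictConcaveOn_log_Ioi.concaveOn.2 hmem1 hmem2 ha hb (by ring)
  have hcomb : (1 - q/L) • (1:ℝ) + (q/L) • (1+L) = 1 + q := by
    rw [smul_eq_mul, smul_eq_mul, mul_one, mul_add, mul_one, div_mul_cancel₀ q hL0.ne']; ring
  rw [hcomb] at key
  simp only [smul_eq_mul, Real.log_one, mul_zero, zero_add] at key
  have hlog1L : 1 ≤ Real.log (1 + L) := by
    rw [Real.le_log_iff_exp_le (by linarith)]
    linarith
  have hqlog : q / L ≤ Real.log (1 + q) := by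
    calc q / L = q/L * 1 := by ring
    _ ≤ q/L * Real.log (1+L) := mul_le_mul_of_nonneg_left hlog1L hb
    _ ≤ Real.log (1+q) := key
  calc q = L * (q / L) := by field_simp
  _ ≤ L * Real.log (1+q) := mul_le_mul_of_nonneg_left hqlog hL0.le

private lemma aux_spectral {d : ℕ} {A : Matrix (Fin d) (Fin d) ℝ} (hA : A.IsHermitian) :
    (1 + A).det = ∏ i, (1 + hA.eigenvalues i) ∧ A.trace = ∑ i, hA.eigenvalues i := by
  set U : Matrix (Fin d) (Fin d) ℝ := (IsHermitian.eigenvectorUnitary hA : Matrix (Fin d) (Fin d) ℝ) with hU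
  have hUs : U * star U = 1 := Unitary.coe_mul_star_self (IsHermitian.eigenvectorUnitary hA)
  have hsU : star U * U = 1 := Unitary.coe_star_mul_self (IsHermitian.eigenvectorUnitary hA)
  have hspec : A = U * diagonal (RCLike.ofReal ∘ hA.eigenvalues) * star U :=
    hA.spectral_theorem
  have hdiag : diagonal (RCLike.ofReal ∘ hA.eigenvalues) = diagonal hA.eigenvalues := rfl
  rw [hdiag] at hspec
  constructor
  · have h1A : 1 + A = U * (1 + diagonal hA.eigenvalues) * star U := by
      rw [Matrix.mul_add, Matrix.add_mul, Matrix.mul_one, hUs, ← hspec]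
    rw [h1A, det_mul, det_mul]
    have hdet : U.det * (star U).det = 1 := by
      rw [← det_mul, hUs, det_one]
    calc U.det * (1 + diagonal hA.eigenvalues).det * (star U).det
        = (1 + diagonal hA.eigenvalues).det * (U.det * (star U).det) := by ring
      _ = (1 + diagonal hA.eigenvalues).det := by rw [hdet, mul_one]
      _ = ∏ i, (1 + hA.eigenvalues i) := by
          rw [← diagonal_one, diagonal_add, det_diagonal]
  · conv_lhs => rw [hspec]
    rw [trace_mul_cycle, hsU, Matrix.one_mul, trace_diagonal]

/-- Elliptical potential lemma (Lemma 11 of Zanette et al.): for a random vector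
`X`, `α > 0`, positive definite `Σ`, and `L ≥ e - 1`, if
`α·E[‖X‖²_{Σ⁻¹}] ≤ L`, then
`α·E[‖X‖²_{Σ⁻¹}] ≤ L·log(det(Σ + α·E[XXᵀ])/det Σ) ≤ α·L·E[‖X‖²_{Σ⁻¹}]`. -/
theorem elliptical_potential
    {Ω : Type*} [MeasurableSpace Ω] (μ : Measure Ω) [IsProbabilityMeasure μ]
    (d : ℕ) (X : Ω → Fin d → ℝ)
    (hmeas : ∀ i, Measurable fun ω => X ω i)
    (hint : ∀ i j, Integrable (fun ω => X ω i * X ω j) μ)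
    (S : Matrix (Fin d) (Fin d) ℝ) (hS : S.PosDef)
    (α L : ℝ) (hα : 0 < α) (hL : Real.exp 1 - 1 ≤ L)
    (hq : α * ∫ ω, (X ω) ⬝ᵥ (S⁻¹ *ᵥ X ω) ∂μ ≤ L) :
    α * (∫ ω, (X ω) ⬝ᵥ (S⁻¹ *ᵥ X ω) ∂μ)
      ≤ L * Real.log
          ((S + α • Matrix.of fun i j => ∫ ω, X ω i * X ω j ∂μ).det / S.det)
    ∧ L * Real.log
          ((S + α • Matrix.of fun i j => ∫ ω, X ω i * X ω j ∂μ).det / S.det)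
      ≤ α * L * ∫ ω, (X ω) ⬝ᵥ (S⁻¹ *ᵥ X ω) ∂μ := by
  classical
  set C : Matrix (Fin d) (Fin d) ℝ := Matrix.of fun i j => ∫ ω, X ω i * X ω j ∂μ with hCdef
  set q : ℝ := ∫ ω, (X ω) ⬝ᵥ (S⁻¹ *ᵥ X ω) ∂μ with hqdef
  -- pointwise expansion of the quadratic form
  have hpt : ∀ ω, (X ω) ⬝ᵥ (S⁻¹ *ᵥ X ω) = ∑ i, ∑ j, S⁻¹ i j * (X ω i * X ω j) := by
    intro ω
    simp only [dotProduct, mulVec, Finset.mul_sum]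
    exact Finset.sum_congr rfl fun i _ => Finset.sum_congr rfl fun j _ => by ring
  have hint2 : ∀ i j, Integrable (fun ω => S⁻¹ i j * (X ω i * X ω j)) μ :=
    fun i j => (hint i j).const_mul _
  have hint1 : ∀ i : Fin d, Integrable (fun ω => ∑ j, S⁻¹ i j * (X ω i * X ω j)) μ :=
    fun i => integrable_finset_sum _ (fun j _ => hint2 i j)
  have hqval : q = ∑ i, ∑ j, S⁻¹ i j * C i j := by
    rw [hqdef]
    simp_rw [hpt]
    rw [integral_finset_sum _ (fun i _ => hint1 i)]
    refine Finset.sum_congr rfl fun i _ => ?_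
    rw [integral_finset_sum _ (fun j _ => hint2 i j)]
    refine Finset.sum_congr rfl fun j _ => ?_
    rw [integral_const_mul]
    rfl
  have hq0 : 0 ≤ q := by
    rw [hqdef]
    apply integral_nonneg
    intro ω
    have := (hS.inv.posSemidef).dotProduct_mulVec_nonneg (X ω)
    simpa using this
  -- C is symmetric PSD
  have hCH : C.IsHermitian := by
    show Cᴴ = C
    ext i j
    simp only [conjTranspose_apply, star_trivial, hCdef, of_apply]
    have : (fun ω => X ω j * X ω i) = fun ω => X ω i * X ω j := by funext ω; ring
    rw [this]
  have hCsymm : ∀ i j, C j i = C i j := by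
    intro i j
    have := congrFun (congrFun hCH.eq i) j
    simpa [conjTranspose_apply] using this
  have hCpsd : C.PosSemidef := by
    refine .of_dotProduct_mulVec_nonneg hCH fun x => ?_
    have hint3 : ∀ i j : Fin d, Integrable (fun ω => (x i * X ω i) * (x j * X ω j)) μ := by
      intro i j
      have h := (hint i j).const_mul (x i * x j)
      have he : (fun ω => x i * x j * (X ω i * X ω j)) = fun ω => (x i * X ω i) * (x j * X ω j) := by
        funext ω; ring
      rwa [he] at h
    have key : star x ⬝ᵥ (C *ᵥ x) = ∫ ω, (∑ i, x i * X ω i)^2 ∂μ := by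
      have hexp : ∀ ω : Ω, (∑ i, x i * X ω i)^2 = ∑ i, ∑ j, (x i * X ω i) * (x j * X ω j) := by
        intro ω
        rw [sq, Finset.sum_mul_sum]
      simp_rw [hexp]
      rw [integral_finset_sum _ (fun i _ => integrable_finset_sum _ fun j _ => hint3 i j)]
      simp only [star_trivial, dotProduct, mulVec, hCdef, of_apply, Finset.mul_sum]
      refine Finset.sum_congr rfl fun i _ => ?_
      rw [integral_finset_sum _ (fun j _ => hint3 i j)]
      refine Finset.sum_congr rfl fun j _ => ?_
      rw [show (fun ω => (x i * X ω i) * (x j * X ω j))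
            = fun ω => (x i * x j) * (X ω i * X ω j) from funext fun ω => by ring,
        integral_const_mul]
      ring
    rw [key]
    apply integral_nonneg
    intro ω
    positivity
  -- matrix algebra
  have hSdet : (0:ℝ) < S.det := hS.det_pos
  have hSunit : IsUnit S.det := isUnit_iff_ne_zero.mpr hSdet.ne'
  set M : Matrix (Fin d) (Fin d) ℝ := α • C with hMdef
  have hMpsd : M.PosSemidef := by
    refine .of_dotProduct_mulVec_nonneg ?_ ?_
    · show Mᴴ = M
      rw [hMdef, conjTranspose_smul, hCH.eq, star_trivial]
    · intro x
      have h := hCpsd.dotProduct_mulVec_nonneg x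
      rw [hMdef, smul_mulVec, dotProduct_smul, smul_eq_mul]
      exact mul_nonneg hα.le h
  set R : Matrix (Fin d) (Fin d) ℝ := CFC.sqrt S⁻¹ with hRdef
  have hRpsd : R.PosSemidef := (CFC.sqrt_nonneg _).posSemidef
  have hRR : R * R = S⁻¹ := by
    have h := CFC.sq_sqrt S⁻¹ hS.inv.posSemidef.nonneg
    rwa [pow_two] at h
  set A : Matrix (Fin d) (Fin d) ℝ := R * M * R with hAdef
  have hApsd : A.PosSemidef := by
    have h := hMpsd.mul_mul_conjTranspose_same R
    rwa [hRpsd.1] at h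
  have hdetratio : (S + M).det / S.det = (1 + A).det := by
    have h1 : S⁻¹ * (S + M) = 1 + S⁻¹ * M := by
      rw [Matrix.mul_add, Matrix.nonsing_inv_mul S hSunit]
    calc (S + M).det / S.det = S.det⁻¹ * (S + M).det := by rw [div_eq_inv_mul]
      _ = (S⁻¹ * (S + M)).det := by rw [det_mul, det_nonsing_inv, Ring.inverse_eq_inv]
      _ = (1 + S⁻¹ * M).det := by rw [h1]
      _ = (1 + R * (R * M)).det := by rw [← hRR, Matrix.mul_assoc]
      _ = (1 + (R * M) * R).det := Matrix.det_one_add_mul_comm R (R * M)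
      _ = (1 + A).det := by rw [hAdef, Matrix.mul_assoc]
  have htraceA : A.trace = α * q := by
    rw [hAdef, trace_mul_cycle, hRR, hMdef, Matrix.mul_smul, trace_smul, smul_eq_mul]
    congr 1
    rw [hqval]
    simp only [Matrix.trace, Matrix.diag, Matrix.mul_apply]
    exact Finset.sum_congr rfl fun i _ => Finset.sum_congr rfl fun j _ => by rw [hCsymm i j]
  -- eigenvalues
  obtain ⟨hdetA, htrA⟩ := aux_spectral hApsd.1
  have hev0 : ∀ i, 0 ≤ hApsd.1.eigenvalues i := hApsd.eigenvalues_nonneg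
  have hsum : ∑ i, hApsd.1.eigenvalues i = α * q := by rw [← htrA, htraceA]
  have hprod : (S + M).det / S.det = ∏ i, (1 + hApsd.1.eigenvalues i) := by
    rw [hdetratio, hdetA]
  have hlogD : Real.log ((S + M).det / S.det)
      = ∑ i, Real.log (1 + hApsd.1.eigenvalues i) := by
    rw [hprod, Real.log_prod]
    intro i _
    have := hev0 i
    exact ne_of_gt (by linarith)
  have hL0 : 0 ≤ L := by
    have := Real.exp_one_gt_d9
    norm_num at this
    linarith
  constructor
  · have h1 : α * q ≤ L * Real.log (1 + α * q) :=
      aux_scalar (mul_nonneg hα.le hq0) hq hL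
    have h2 : Real.log (1 + α * q) ≤ Real.log ((S + M).det / S.det) := by
      rw [hprod]
      have hle : 1 + α * q ≤ ∏ i, (1 + hApsd.1.eigenvalues i) := by
        rw [← hsum]
        exact aux_one_add_sum_le_prod _ _ (fun i _ => hev0 i)
      have hpos : 0 < 1 + α * q := by
        have := mul_nonneg hα.le hq0; linarith
      exact Real.log_le_log hpos hle
    calc α * q ≤ L * Real.log (1 + α * q) := h1
      _ ≤ L * Real.log ((S + M).det / S.det) := mul_le_mul_of_nonneg_left h2 hL0
  · rw [hlogD]
    calc L * ∑ i, Real.log (1 + hApsd.1.eigenvalues i)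
        ≤ L * ∑ i, hApsd.1.eigenvalues i := by
          refine mul_le_mul_of_nonneg_left (Finset.sum_le_sum fun i _ => ?_) hL0
          have h := Real.log_le_sub_one_of_pos
            (show (0:ℝ) < 1 + hApsd.1.eigenvalues i by have := hev0 i; linarith)
          linarith
      _ = L * (α * q) := by rw [hsum]
      _ = α * L * q := by ring
end
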